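/- Let h : (0,∞) → ℝ be a continuous function with h(1) = 1 and h(n) ≠ 0 for every positive integer n, and suppose that h(n/m) = h(max(n,m))/h(min(n,m)) for all positive integers n and m. Then there exists a real number α such that h(q) = (min(q, 1/q))^α for every positive rational number q. -/

import Mathlib

open Set Real

/-- Classification of continuous multiplicative-type functions: if `h : (0,∞) → ℝ` is
continuous, `h(1) = 1`, `h(n) ≠ 0` for every positive integer `n`, and
`h(n/m) = h(max(n,m))/h(min(n,m))` for all positive integers `n, m`, then there is a real
`α` with `h(q) = min(q, 1/q)^α` for every positive rational `q`. -/
theorem hardy_kernel_classification (h : ℝ → ℝ)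
    (hc : ContinuousOn h (Set.Ioi (0 : ℝ)))
    (h1 : h 1 = 1)
    (hnz : ∀ n : ℕ+, h (n : ℝ) ≠ 0)
    (hmul : ∀ n m : ℕ+,
      h ((n : ℝ) / (m : ℝ)) = h (max (n : ℝ) (m : ℝ)) / h (min (n : ℝ) (m : ℝ))) :
    ∃ α : ℝ, ∀ q : ℚ, 0 < q → h (q : ℝ) = (min (q : ℝ) ((q : ℝ)⁻¹)) ^ α := by
  -- integer multiplicativity
  have hint : ∀ n m : ℕ+, h ((n : ℝ) * m) = h n * h m := by
    intro n m
    have hm0 : (0:ℝ) < (m:ℝ) := by exact_mod_cast m.pos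
    have hn1 : (1:ℝ) ≤ (n:ℝ) := by exact_mod_cast n.one_le
    have key := hmul (n*m) m
    have hle : (m:ℝ) ≤ ((n*m : ℕ+):ℝ) := by push_cast; nlinarith
    rw [max_eq_left hle, min_eq_right hle] at key
    have heq : ((n*m : ℕ+):ℝ)/(m:ℝ) = (n:ℝ) := by push_cast; field_simp
    rw [heq] at key
    have hmz := hnz m
    have : ((n*m:ℕ+):ℝ) = (n:ℝ)*(m:ℝ) := by push_cast; ring
    rw [this] at key
    field_simp at key
    linarith [key]
  have hdiv : ∀ a b : ℕ+, (b:ℝ) ≤ (a:ℝ) → h ((a:ℝ)/(b:ℝ)) = h a / h b := by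
    intro a b hle
    rw [hmul a b, max_eq_left hle, min_eq_right hle]
  -- set of rationals ≥ 1 in representation a/b
  set S : Set ℝ := {x | ∃ a b : ℕ+, (b:ℝ) ≤ (a:ℝ) ∧ x = (a:ℝ)/(b:ℝ)} with hS
  have hSsub : S ⊆ Ici (1:ℝ) := by
    rintro x ⟨a, b, hab, rfl⟩
    have hb0 : (0:ℝ) < (b:ℝ) := by exact_mod_cast b.pos
    exact mem_Ici.mpr ((one_le_div hb0).mpr hab)
  have hrep : ∀ q : ℚ, 0 < q → ∃ a b : ℕ+, (q:ℝ) = (a:ℝ)/(b:ℝ) := by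
    intro q hq
    have hnum : 0 < q.num := Rat.num_pos.mpr hq
    refine ⟨⟨q.num.toNat, by omega⟩, ⟨q.den, q.pos⟩, ?_⟩
    show (q:ℝ) = (q.num.toNat : ℝ) / (q.den : ℝ)
    rw [Rat.cast_def]
    congr 1
    exact_mod_cast (congrArg Int.cast (Int.toNat_of_nonneg hnum.le)).symm
  have hSmem : ∀ q : ℚ, 1 ≤ (q:ℝ) → (q:ℝ) ∈ S := by
    intro q hq
    obtain ⟨a, b, hab⟩ := hrep q (by exact_mod_cast lt_of_lt_of_le one_pos hq)
    have hb0 : (0:ℝ) < (b:ℝ) := by exact_mod_cast b.pos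
    refine ⟨a, b, ?_, hab⟩
    rw [hab] at hq
    calc (b:ℝ) = 1 * b := (one_mul _).symm
    _ ≤ ((a:ℝ)/b) * b := by gcongr
    _ = a := by field_simp
  have hdense : Ici (1:ℝ) ⊆ closure S := by
    intro x hx
    rw [Metric.mem_closure_iff]
    intro ε hε
    obtain ⟨q, hq1, hq2⟩ := exists_rat_btwn (lt_add_of_pos_right x hε)
    refine ⟨q, hSmem q (le_trans hx hq1.le), ?_⟩
    rw [Real.dist_eq, abs_sub_lt_iff]
    constructor <;> linarith
  -- multiplicativity on S
  have hSmul : EqOn (fun p : ℝ × ℝ => h (p.1 * p.2)) (fun p => h p.1 * h p.2) (S ×ˢ S) := by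
    rintro ⟨x, y⟩ ⟨⟨a, b, hab, rfl⟩, ⟨c, d, hcd, rfl⟩⟩
    have hb0 : (0:ℝ) < (b:ℝ) := by exact_mod_cast b.pos
    have hd0 : (0:ℝ) < (d:ℝ) := by exact_mod_cast d.pos
    have hprod : ((a:ℝ)/b) * ((c:ℝ)/d) = ((a*c : ℕ+):ℝ)/((b*d : ℕ+):ℝ) := by
      push_cast; field_simp
    have hle : ((b*d:ℕ+):ℝ) ≤ ((a*c:ℕ+):ℝ) := by
      push_cast
      exact mul_le_mul hab hcd hd0.le (le_trans hb0.le hab)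
    simp only
    rw [hprod, hdiv _ _ hle, hdiv _ _ hab, hdiv _ _ hcd]
    have h1' : ((a*c:ℕ+):ℝ) = (a:ℝ)*c := by push_cast; ring
    have h2' : ((b*d:ℕ+):ℝ) = (b:ℝ)*d := by push_cast; ring
    rw [h1', h2', hint a c, hint b d]
    field_simp
  -- continuity of the two maps on Ici 1 ×ˢ Ici 1
  have hmaps : MapsTo (fun p : ℝ × ℝ => p.1 * p.2) (Ici (1:ℝ) ×ˢ Ici (1:ℝ)) (Ioi (0:ℝ)) := by
    rintro ⟨x, y⟩ ⟨hx, hy⟩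
    have h1xy : (1:ℝ) ≤ x * y := one_le_mul_of_one_le_of_one_le hx hy
    exact lt_of_lt_of_le one_pos h1xy
  have hcF : ContinuousOn (fun p : ℝ × ℝ => h (p.1 * p.2)) (Ici (1:ℝ) ×ˢ Ici (1:ℝ)) :=
    hc.comp (continuous_fst.mul continuous_snd).continuousOn hmaps
  have hcG : ContinuousOn (fun p : ℝ × ℝ => h p.1 * h p.2) (Ici (1:ℝ) ×ˢ Ici (1:ℝ)) := by
    apply ContinuousOn.mul
    · exact hc.comp continuous_fst.continuousOn
        (fun p hp => mem_Ioi.mpr (lt_of_lt_of_le one_pos hp.1))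
    · exact hc.comp continuous_snd.continuousOn
        (fun p hp => mem_Ioi.mpr (lt_of_lt_of_le one_pos hp.2))
  have hmulR : ∀ x y : ℝ, 1 ≤ x → 1 ≤ y → h (x * y) = h x * h y := by
    have := hSmul.of_subset_closure hcF hcG (prod_mono hSsub hSsub)
      (by rw [closure_prod_eq]; exact prod_mono hdense hdense)
    intro x y hx hy
    exact this (mk_mem_prod hx hy)
  -- positivity on [1, ∞)
  have hpos : ∀ x : ℝ, 1 ≤ x → 0 < h x := by
    intro x hx
    have hx0 : (0:ℝ) < x := lt_of_lt_of_le one_pos hx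
    have hsq' : Real.sqrt x * Real.sqrt x = x := Real.mul_self_sqrt hx0.le
    have hsq : h x = h (Real.sqrt x) ^ 2 := by
      conv_lhs => rw [← hsq']
      rw [hmulR _ _ (Real.one_le_sqrt.mpr hx) (Real.one_le_sqrt.mpr hx)]
      ring
    have hne : h x ≠ 0 := by
      intro h0
      set n : ℕ+ := ⟨⌈x⌉₊, Nat.ceil_pos.mpr hx0⟩ with hn
      have hxn : x ≤ (n:ℝ) := by
        simp only [hn]; exact_mod_cast Nat.le_ceil x
      have h1n : (1:ℝ) ≤ (n:ℝ)/x := (one_le_div hx0).mpr hxn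
      have : (n:ℝ) = x * ((n:ℝ)/x) := by field_simp
      have := hnz n
      rw [‹(n:ℝ) = x * ((n:ℝ)/x)›, hmulR _ _ hx h1n, h0, zero_mul] at this
      exact this rfl
    rw [hsq] at hne ⊢
    positivity
  -- define f and show it's linear on [0, ∞)
  set f : ℝ → ℝ := fun t => Real.log (h (Real.exp t)) with hf
  have hfadd : ∀ s t : ℝ, 0 ≤ s → 0 ≤ t → f (s + t) = f s + f t := by
    intro s t hs ht
    have hes : (1:ℝ) ≤ Real.exp s := Real.one_le_exp hs
    have het : (1:ℝ) ≤ Real.exp t := Real.one_le_exp ht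
    simp only [hf, Real.exp_add, hmulR _ _ hes het]
    exact Real.log_mul (hpos _ hes).ne' (hpos _ het).ne'
  have hf0 : f 0 = 0 := by simp [hf, Real.exp_zero, h1]
  have hfnat : ∀ (n : ℕ) (t : ℝ), 0 ≤ t → f (n * t) = n * f t := by
    intro n
    induction n with
    | zero => intro t ht; simpa using hf0
    | succ k ih =>
      intro t ht
      have : ((k:ℝ) + 1) * t = (k:ℝ) * t + t := by ring
      push_cast
      rw [this, hfadd _ _ (by positivity) ht, ih t ht]
      ring
  have hfrat : ∀ q : ℚ, 0 ≤ (q:ℝ) → f q = q * f 1 := by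
    intro q hq
    have hden : ((q.den:ℝ)) * (q:ℝ) = (q.num:ℝ) := by
      rw [mul_comm]
      exact_mod_cast Rat.mul_den_eq_num q
    have hnum0 : 0 ≤ q.num := by
      have : (0:ℝ) ≤ (q.num:ℝ) := by rw [← hden]; positivity
      exact_mod_cast this
    have h1' := hfnat q.den q hq
    rw [hden] at h1'
    have h2' := hfnat q.num.toNat 1 zero_le_one
    rw [mul_one] at h2'
    have h3' : ((q.num.toNat : ℕ):ℝ) = (q.num:ℝ) := by
      exact_mod_cast congrArg Int.cast (Int.toNat_of_nonneg hnum0)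
    rw [h3'] at h2'
    rw [h2'] at h1'
    have hd0 : (0:ℝ) < (q.den:ℝ) := by exact_mod_cast q.pos
    apply mul_left_cancel₀ hd0.ne'
    rw [← h1', ← hden]
    ring
  have hQ : Ici (0:ℝ) ⊆ closure {x : ℝ | ∃ q : ℚ, 0 ≤ (q:ℝ) ∧ x = (q:ℝ)} := by
    intro x hx
    rw [Metric.mem_closure_iff]
    intro ε hε
    obtain ⟨q, hq1, hq2⟩ := exists_rat_btwn (lt_add_of_pos_right x hε)
    refine ⟨q, ⟨q, le_trans hx hq1.le, rfl⟩, ?_⟩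
    rw [Real.dist_eq, abs_sub_lt_iff]
    constructor <;> linarith
  have hcf : ContinuousOn f (Ici (0:ℝ)) := by
    apply Real.continuousOn_log.comp
      (hc.comp Real.continuous_exp.continuousOn (fun t _ => Real.exp_pos t))
    intro t ht
    exact (hpos _ (Real.one_le_exp ht)).ne'
  have hflin : ∀ t : ℝ, 0 ≤ t → f t = t * f 1 := by
    have heq : EqOn f (fun t => t * f 1) {x : ℝ | ∃ q : ℚ, 0 ≤ (q:ℝ) ∧ x = (q:ℝ)} := by
      rintro x ⟨q, hq, rfl⟩
      exact hfrat q hq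
    have := heq.of_subset_closure hcf (by fun_prop)
      (fun x ⟨q, hq, hx⟩ => by rw [hx]; exact hq) hQ
    intro t ht
    exact this ht
  -- h x = x ^ (f 1) on [1, ∞)
  have hpow : ∀ x : ℝ, 1 ≤ x → h x = x ^ (f 1) := by
    intro x hx
    have hx0 : (0:ℝ) < x := lt_of_lt_of_le one_pos hx
    have hl : f (Real.log x) = Real.log x * f 1 := hflin _ (Real.log_nonneg hx)
    have hfl : f (Real.log x) = Real.log (h x) := by
      simp only [hf, Real.exp_log hx0]
    rw [hfl] at hl
    rw [Real.rpow_def_of_pos hx0, ← hl, Real.exp_log (hpos x hx)]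
  -- symmetry h q = h q⁻¹
  have hsym : ∀ q : ℚ, 0 < q → h q = h ((q:ℝ)⁻¹) := by
    intro q hq
    obtain ⟨a, b, hab⟩ := hrep q hq
    have ha0 : (0:ℝ) < (a:ℝ) := by exact_mod_cast a.pos
    have hb0 : (0:ℝ) < (b:ℝ) := by exact_mod_cast b.pos
    have hinv : (q:ℝ)⁻¹ = (b:ℝ)/(a:ℝ) := by rw [hab]; field_simp
    rw [hinv, hab, hmul a b, hmul b a, max_comm, min_comm]
  refine ⟨-(f 1), ?_⟩
  intro q hq
  have hq0 : (0:ℝ) < (q:ℝ) := by exact_mod_cast hq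
  rcases le_or_gt 1 (q:ℝ) with hq1 | hq1
  · have hmin : min (q:ℝ) ((q:ℝ)⁻¹) = (q:ℝ)⁻¹ :=
      min_eq_right (le_trans (inv_le_one_of_one_le₀ hq1) hq1)
    rw [hmin, Real.rpow_neg (inv_nonneg.mpr hq0.le), Real.inv_rpow hq0.le, inv_inv]
    exact hpow _ hq1
  · have hq1' : (1:ℝ) ≤ (q:ℝ)⁻¹ := (one_le_inv₀ hq0).mpr hq1.le
    have hmin : min (q:ℝ) ((q:ℝ)⁻¹) = (q:ℝ) := min_eq_left (le_trans hq1.le hq1')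
    rw [hmin, Real.rpow_neg hq0.le, ← Real.inv_rpow hq0.le]
    exact (hsym q hq).trans (hpow _ hq1')
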